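/- On ℝ⁶ with coordinates (x₁,…,x₆) = (γ₁,γ₂,γ₃,M₁,M₂,M₃), define the constant trivector T^{abc} = ∑_{i,j,k=1}^{3} ε_{ijk} (∂_i ∧ ∂_{j+3} ∧ ∂_{k+3})^{abc}, where (u∧v∧w)^{abc} = u_a(v_bw_c − v_cw_b) − u_b(v_aw_c − v_cw_a) + u_c(v_aw_b − v_bw_a). Let X = (2γ₃M₂−4γ₂M₃, −2γ₃M₁+4γ₁M₃, 2γ₂M₁−2γ₁M₂, −2M₂M₃, 2M₁M₃−aγ₃, aγ₂) be the Kovalevskaya vector field, f₂ = γ₁M₁+γ₂M₂+γ₃M₃, f₃ = M₁²+M₂²+2M₃²+aγ₁, and let P_c be the antisymmetric matrix field with entries (i,j) ↦ 0 for i,j ≤ 3, (i,j+3) ↦ ∑_k ε_{ijk}γ_k, (i+3,j+3) ↦ ∑_k ε_{ijk}M_k. Then at every point: (a) ∑_{c=1}^{6} T^{abc} ∂f₂/∂x_c = 2(P_c)_{ab} for all a,b; (b) ∑_{b,c=1}^{6} T^{abc} (∂f₂/∂x_b)(∂f₃/∂x_c) = −2X_a for all a; (c) the conditional invariance ∑_{c=1}^{6}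 (L_X T)^{abc} ∂f₂/∂x_c = 0 holds for all a,b, where (L_X T)^{abc} = −∑_ℓ ( (∂X_a/∂x_ℓ) T^{ℓbc} + (∂X_b/∂x_ℓ) T^{aℓc} + (∂X_c/∂x_ℓ) T^{abℓ} ). -/

import Mathlib

noncomputable section

open scoped BigOperators

/-- Partial derivative of `f` in the `i`-th coordinate direction at `x`. -/
def pd {n : ℕ} (i : Fin n) (f : (Fin n → ℝ) → ℝ) (x : Fin n → ℝ) : ℝ :=
  fderiv ℝ f x (Pi.single i 1)

/-- The Kovalevskaya vector field on `ℝ⁶` with coordinates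
`(x₁,…,x₆) = (γ₁,γ₂,γ₃,M₁,M₂,M₃)`. -/
def kovX (a : ℝ) (x : Fin 6 → ℝ) : Fin 6 → ℝ :=
  ![2 * x 2 * x 4 - 4 * x 1 * x 5, -(2 * x 2 * x 3) + 4 * x 0 * x 5,
    2 * x 1 * x 3 - 2 * x 0 * x 4, -(2 * x 4 * x 5), 2 * x 3 * x 5 - a * x 2,
    a * x 1]

/-- `f₁ = γ₁² + γ₂² + γ₃²`. -/
def kovF₁ (x : Fin 6 → ℝ) : ℝ := x 0 ^ 2 + x 1 ^ 2 + x 2 ^ 2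

/-- `f₂ = γ₁M₁ + γ₂M₂ + γ₃M₃`. -/
def kovF₂ (x : Fin 6 → ℝ) : ℝ := x 0 * x 3 + x 1 * x 4 + x 2 * x 5

/-- `f₃ = M₁² + M₂² + 2M₃² + aγ₁`. -/
def kovF₃ (a : ℝ) (x : Fin 6 → ℝ) : ℝ :=
  x 3 ^ 2 + x 4 ^ 2 + 2 * x 5 ^ 2 + a * x 0

/-- The Kovalevskaya integral `f₄ = (M₁² − M₂² − aγ₁)² + (2M₁M₂ − aγ₂)²`. -/
def kovF₄ (a : ℝ) (x : Fin 6 → ℝ) : ℝ :=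
  (x 3 ^ 2 - x 4 ^ 2 - a * x 0) ^ 2 + (2 * x 3 * x 4 - a * x 1) ^ 2

/-- Contraction of a matrix field with the gradient of a function:
`(P∇f)_i = ∑_j P_{ij} ∂f/∂x_j`. -/
def Pgrad {n : ℕ} (P : (Fin n → ℝ) → Matrix (Fin n) (Fin n) ℝ)
    (f : (Fin n → ℝ) → ℝ) (x : Fin n → ℝ) (i : Fin n) : ℝ :=
  ∑ j, P x i j * pd j f x

/-- Lie derivative of a (2,0) tensor (matrix field) `P` along the vector field `X`:
`(L_X P)_{ij} = ∑_k (X_k ∂P_{ij}/∂x_k − P_{kj} ∂X_i/∂x_k − P_{ik} ∂X_j/∂x_k)`. -/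
def matLie {n : ℕ} (X : (Fin n → ℝ) → Fin n → ℝ)
    (P : (Fin n → ℝ) → Matrix (Fin n) (Fin n) ℝ) (x : Fin n → ℝ) (i j : Fin n) : ℝ :=
  ∑ k, (X x k * pd k (fun y => P y i j) x - P x k j * pd k (fun y => X y i) x
        - P x i k * pd k (fun y => X y j) x)

/-- The Jacobiator of an antisymmetric matrix field; it vanishes identically iff `P`
satisfies the Jacobi identity (i.e. is a Poisson bivector). -/
def jacobiator {n : ℕ} (P : (Fin n → ℝ) → Matrix (Fin n) (Fin n) ℝ)
    (x : Fin n → ℝ) (i j k : Fin n) : ℝ :=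
  ∑ l, (P x l i * pd l (fun y => P y j k) x + P x l j * pd l (fun y => P y k i) x
        + P x l k * pd l (fun y => P y i j) x)

/-- The Levi-Civita symbol on three indices, `ε₀₁₂ = 1` (0-based). -/
def eps (i j k : Fin 3) : ℝ :=
  (((j : ℕ) : ℝ) - ((i : ℕ) : ℝ)) * (((k : ℕ) : ℝ) - ((j : ℕ) : ℝ)) *
    (((k : ℕ) : ℝ) - ((i : ℕ) : ℝ)) / 2

/-- Components of the wedge product of three vectors:
`(u∧v∧w)^{abc} = u_a(v_bw_c − v_cw_b) − u_b(v_aw_c − v_cw_a) + u_c(v_aw_b − v_bw_a)`. -/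
def wedge3 (u v w : Fin 6 → ℝ) (a b c : Fin 6) : ℝ :=
  u a * (v b * w c - v c * w b) - u b * (v a * w c - v c * w a)
    + u c * (v a * w b - v b * w a)

/-- The `i`-th standard basis vector `∂_i` of `ℝ⁶`. -/
def e6 (i : Fin 6) : Fin 6 → ℝ := fun j => if j = i then 1 else 0

/-- Embedding of an index `i ∈ {1,2,3}` as the index of `∂_i` in `ℝ⁶`. -/
def lo (i : Fin 3) : Fin 6 := ⟨(i : ℕ), by have := i.isLt; omega⟩

/-- Embedding of an index `i ∈ {1,2,3}` as the index of `∂_{i+3}` in `ℝ⁶`. -/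
def hi (i : Fin 3) : Fin 6 := ⟨(i : ℕ) + 3, by have := i.isLt; omega⟩

/-- Lie derivative along `X` of a trivector `T` with constant components:
`(L_X T)^{abc} = −∑_ℓ ((∂X_a/∂x_ℓ)T^{ℓbc} + (∂X_b/∂x_ℓ)T^{aℓc} + (∂X_c/∂x_ℓ)T^{abℓ})`. -/
def triLie (X : (Fin 6 → ℝ) → Fin 6 → ℝ) (T : Fin 6 → Fin 6 → Fin 6 → ℝ)
    (x : Fin 6 → ℝ) (a b c : Fin 6) : ℝ :=
  -∑ l, (pd l (fun y => X y a) x * T l b c + pd l (fun y => X y b) x * T a l c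
        + pd l (fun y => X y c) x * T a b l)

/-- The canonical Lie–Poisson bivector `P_c` on `e*(3)`:
`(i,j) ↦ 0` for `i,j ≤ 3`, `(i,j+3) ↦ ∑_k ε_{ijk}γ_k`, `(i+3,j+3) ↦ ∑_k ε_{ijk}M_k`. -/
def kovPc (x : Fin 6 → ℝ) : Matrix (Fin 6) (Fin 6) ℝ :=
  !![0, 0, 0, 0, x 2, -(x 1);
     0, 0, 0, -(x 2), 0, x 0;
     0, 0, 0, x 1, -(x 0), 0;
     0, x 2, -(x 1), 0, x 5, -(x 4);
     -(x 2), 0, x 0, -(x 5), 0, x 3;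
     x 1, -(x 0), 0, x 4, -(x 3), 0]

/-- The constant trivector `T = ∑_{i,j,k} ε_{ijk} ∂_i ∧ ∂_{j+3} ∧ ∂_{k+3}`. -/
def kovT (a b c : Fin 6) : ℝ :=
  ∑ i : Fin 3, ∑ j : Fin 3, ∑ k : Fin 3,
    eps i j k * wedge3 (e6 (lo i)) (e6 (hi j)) (e6 (hi k)) a b c

lemma pd_of_hasFDerivAt {n : ℕ} {f : (Fin n → ℝ) → ℝ} {x : Fin n → ℝ}
    {L : (Fin n → ℝ) →L[ℝ] ℝ} (h : HasFDerivAt f L x) (i : Fin n) :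
    pd i f x = L (Pi.single i 1) := by
  rw [pd, h.fderiv]

lemma kf1 : (1:Fin 6) = (0:Fin 5).succ := rfl
lemma kf2 : (2:Fin 6) = (1:Fin 5).succ := rfl
lemma kf3 : (3:Fin 6) = (2:Fin 5).succ := rfl
lemma kf4 : (4:Fin 6) = (3:Fin 5).succ := rfl
lemma kf5 : (5:Fin 6) = (4:Fin 5).succ := rfl
lemma kg1 : (1:Fin 5) = (0:Fin 4).succ := rfl
lemma kg2 : (2:Fin 5) = (1:Fin 4).succ := rfl
lemma kg3 : (3:Fin 5) = (2:Fin 4).succ := rfl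
lemma kg4 : (4:Fin 5) = (3:Fin 4).succ := rfl
lemma kh1 : (1:Fin 4) = (0:Fin 3).succ := rfl
lemma kh2 : (2:Fin 4) = (1:Fin 3).succ := rfl
lemma kh3 : (3:Fin 4) = (2:Fin 3).succ := rfl
lemma ki1 : (1:Fin 3) = (0:Fin 2).succ := rfl
lemma ki2 : (2:Fin 3) = (1:Fin 2).succ := rfl
lemma kj1 : (1:Fin 2) = (0:Fin 1).succ := rfl

private lemma hA (i : Fin 6) (x : Fin 6 → ℝ) :
    HasFDerivAt (fun y : Fin 6 → ℝ => y i) ((ContinuousLinearMap.proj i : (Fin 6 → ℝ) →L[ℝ] ℝ)) x :=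
  hasFDerivAt_apply (𝕜 := ℝ) i x

lemma pd_F2 (x : Fin 6 → ℝ) (k : Fin 6) :
    pd k kovF₂ x = ![x 3, x 4, x 5, x 0, x 1, x 2] k := by
  have h : HasFDerivAt kovF₂ _ x :=
    (((hA 0 x).mul (hA 3 x)).add ((hA 1 x).mul (hA 4 x))).add ((hA 2 x).mul (hA 5 x))
  rw [pd_of_hasFDerivAt h]
  fin_cases k <;>
    simp (config := { decide := true }) [ContinuousLinearMap.proj, Pi.single_apply,
      kf1,kf2,kf3,kf4,kf5,kg1,kg2,kg3,kg4,kh1,kh2,kh3,ki1,ki2,kj1,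
      Matrix.cons_val_succ, Matrix.vecHead, Matrix.vecTail, Fin.ext_iff, Fin.val_succ] <;> ring

lemma pd_F3 (a : ℝ) (x : Fin 6 → ℝ) (k : Fin 6) :
    pd k (kovF₃ a) x = ![a, 0, 0, 2 * x 3, 2 * x 4, 4 * x 5] k := by
  have he : kovF₃ a = fun y : Fin 6 → ℝ =>
      y 3 * y 3 + y 4 * y 4 + 2 * (y 5 * y 5) + a * y 0 := by
    funext y; simp [kovF₃]; ring
  rw [he]
  have h : HasFDerivAt (fun y : Fin 6 → ℝ =>
      y 3 * y 3 + y 4 * y 4 + 2 * (y 5 * y 5) + a * y 0) _ x :=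
    ((((hA 3 x).mul (hA 3 x)).add ((hA 4 x).mul (hA 4 x))).add
      (((hA 5 x).mul (hA 5 x)).const_mul 2)).add ((hA 0 x).const_mul a)
  rw [pd_of_hasFDerivAt h]
  fin_cases k <;>
    simp (config := { decide := true }) [ContinuousLinearMap.proj, Pi.single_apply,
      kf1,kf2,kf3,kf4,kf5,kg1,kg2,kg3,kg4,kh1,kh2,kh3,ki1,ki2,kj1,
      Matrix.cons_val_succ, Matrix.vecHead, Matrix.vecTail, Fin.ext_iff, Fin.val_succ] <;> ring

/-- Jacobian of the Kovalevskaya field. -/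
def jacX (a : ℝ) (x : Fin 6 → ℝ) : Fin 6 → Fin 6 → ℝ :=
  ![![0, -(4 * x 5), 2 * x 4, 0, 2 * x 2, -(4 * x 1)],
    ![4 * x 5, 0, -(2 * x 3), -(2 * x 2), 0, 4 * x 0],
    ![-(2 * x 4), 2 * x 3, 0, 2 * x 1, -(2 * x 0), 0],
    ![0, 0, 0, 0, -(2 * x 5), -(2 * x 4)],
    ![0, 0, -a, 2 * x 5, 0, 2 * x 3],
    ![0, a, 0, 0, 0, 0]]

set_option maxHeartbeats 2000000 in
lemma pd_kovX (a : ℝ) (x : Fin 6 → ℝ) (i l : Fin 6) :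
    pd l (fun y => kovX a y i) x = jacX a x i l := by
  fin_cases i
  · show pd l (fun y => 2 * y 2 * y 4 - 4 * y 1 * y 5) x = _
    have h : HasFDerivAt (fun y : Fin 6 → ℝ => 2 * y 2 * y 4 - 4 * y 1 * y 5) _ x :=
      (((hA 2 x).const_mul 2).mul (hA 4 x)).sub (((hA 1 x).const_mul 4).mul (hA 5 x))
    rw [pd_of_hasFDerivAt h]
    fin_cases l <;>
      simp (config := { decide := true }) [ContinuousLinearMap.proj, Pi.single_apply, jacX,
        kf1,kf2,kf3,kf4,kf5,kg1,kg2,kg3,kg4,kh1,kh2,kh3,ki1,ki2,kj1,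
        Matrix.cons_val_succ, Matrix.vecHead, Matrix.vecTail, Fin.ext_iff, Fin.val_succ] <;> ring
  · show pd l (fun y => -(2 * y 2 * y 3) + 4 * y 0 * y 5) x = _
    have h : HasFDerivAt (fun y : Fin 6 → ℝ => -(2 * y 2 * y 3) + 4 * y 0 * y 5) _ x :=
      ((((hA 2 x).const_mul 2).mul (hA 3 x)).neg).add (((hA 0 x).const_mul 4).mul (hA 5 x))
    rw [pd_of_hasFDerivAt h]
    fin_cases l <;>
      simp (config := { decide := true }) [ContinuousLinearMap.proj, Pi.single_apply, jacX,
        kf1,kf2,kf3,kf4,kf5,kg1,kg2,kg3,kg4,kh1,kh2,kh3,ki1,ki2,kj1,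
        Matrix.cons_val_succ, Matrix.vecHead, Matrix.vecTail, Fin.ext_iff, Fin.val_succ] <;> ring
  · show pd l (fun y => 2 * y 1 * y 3 - 2 * y 0 * y 4) x = _
    have h : HasFDerivAt (fun y : Fin 6 → ℝ => 2 * y 1 * y 3 - 2 * y 0 * y 4) _ x :=
      (((hA 1 x).const_mul 2).mul (hA 3 x)).sub (((hA 0 x).const_mul 2).mul (hA 4 x))
    rw [pd_of_hasFDerivAt h]
    fin_cases l <;>
      simp (config := { decide := true }) [ContinuousLinearMap.proj, Pi.single_apply, jacX,
        kf1,kf2,kf3,kf4,kf5,kg1,kg2,kg3,kg4,kh1,kh2,kh3,ki1,ki2,kj1,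
        Matrix.cons_val_succ, Matrix.vecHead, Matrix.vecTail, Fin.ext_iff, Fin.val_succ] <;> ring
  · show pd l (fun y => -(2 * y 4 * y 5)) x = _
    have h : HasFDerivAt (fun y : Fin 6 → ℝ => -(2 * y 4 * y 5)) _ x :=
      ((((hA 4 x).const_mul 2).mul (hA 5 x))).neg
    rw [pd_of_hasFDerivAt h]
    fin_cases l <;>
      simp (config := { decide := true }) [ContinuousLinearMap.proj, Pi.single_apply, jacX,
        kf1,kf2,kf3,kf4,kf5,kg1,kg2,kg3,kg4,kh1,kh2,kh3,ki1,ki2,kj1,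
        Matrix.cons_val_succ, Matrix.vecHead, Matrix.vecTail, Fin.ext_iff, Fin.val_succ] <;> ring
  · show pd l (fun y => 2 * y 3 * y 5 - a * y 2) x = _
    have h : HasFDerivAt (fun y : Fin 6 → ℝ => 2 * y 3 * y 5 - a * y 2) _ x :=
      (((hA 3 x).const_mul 2).mul (hA 5 x)).sub ((hA 2 x).const_mul a)
    rw [pd_of_hasFDerivAt h]
    fin_cases l <;>
      simp (config := { decide := true }) [ContinuousLinearMap.proj, Pi.single_apply, jacX,
        kf1,kf2,kf3,kf4,kf5,kg1,kg2,kg3,kg4,kh1,kh2,kh3,ki1,ki2,kj1,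
        Matrix.cons_val_succ, Matrix.vecHead, Matrix.vecTail, Fin.ext_iff, Fin.val_succ] <;> ring
  · show pd l (fun y => a * y 1) x = _
    have h : HasFDerivAt (fun y : Fin 6 → ℝ => a * y 1) _ x := (hA 1 x).const_mul a
    rw [pd_of_hasFDerivAt h]
    fin_cases l <;>
      simp (config := { decide := true }) [ContinuousLinearMap.proj, Pi.single_apply, jacX,
        kf1,kf2,kf3,kf4,kf5,kg1,kg2,kg3,kg4,kh1,kh2,kh3,ki1,ki2,kj1,
        Matrix.cons_val_succ, Matrix.vecHead, Matrix.vecTail, Fin.ext_iff, Fin.val_succ] <;> ring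

/-- Explicit table for the trivector `kovT`. -/
def tT : Fin 6 → Fin 6 → Fin 6 → ℝ :=
  ![![![0, 0, 0, 0, 0, 0], ![0, 0, 0, 0, 0, 0], ![0, 0, 0, 0, 0, 0],
     ![0, 0, 0, 0, 0, 0], ![0, 0, 0, 0, 0, 2], ![0, 0, 0, 0, -2, 0]],
    ![![0, 0, 0, 0, 0, 0], ![0, 0, 0, 0, 0, 0], ![0, 0, 0, 0, 0, 0],
     ![0, 0, 0, 0, 0, -2], ![0, 0, 0, 0, 0, 0], ![0, 0, 0, 2, 0, 0]],
    ![![0, 0, 0, 0, 0, 0], ![0, 0, 0, 0, 0, 0], ![0, 0, 0, 0, 0, 0],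
     ![0, 0, 0, 0, 2, 0], ![0, 0, 0, -2, 0, 0], ![0, 0, 0, 0, 0, 0]],
    ![![0, 0, 0, 0, 0, 0], ![0, 0, 0, 0, 0, 2], ![0, 0, 0, 0, -2, 0],
     ![0, 0, 0, 0, 0, 0], ![0, 0, 2, 0, 0, 0], ![0, -2, 0, 0, 0, 0]],
    ![![0, 0, 0, 0, 0, -2], ![0, 0, 0, 0, 0, 0], ![0, 0, 0, 2, 0, 0],
     ![0, 0, -2, 0, 0, 0], ![0, 0, 0, 0, 0, 0], ![2, 0, 0, 0, 0, 0]],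
    ![![0, 0, 0, 0, 2, 0], ![0, 0, 0, -2, 0, 0], ![0, 0, 0, 0, 0, 0],
     ![0, 2, 0, 0, 0, 0], ![-2, 0, 0, 0, 0, 0], ![0, 0, 0, 0, 0, 0]]]

set_option maxHeartbeats 4000000 in
lemma kovT_eq (i j k : Fin 6) : kovT i j k = tT i j k := by
  fin_cases i <;> fin_cases j <;> fin_cases k <;>
    simp (config := { decide := true }) [kovT, eps, wedge3, e6, lo, hi, tT,
      Fin.sum_univ_three, Fin.val_succ,
      kf1,kf2,kf3,kf4,kf5,kg1,kg2,kg3,kg4,kh1,kh2,kh3,ki1,ki2,kj1,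
      Matrix.cons_val_succ, Matrix.vecHead, Matrix.vecTail] <;> norm_num

set_option maxHeartbeats 12000000 in
/-- The conditional numerical invariant `T` of the Kovalevskaya case:
(a) `T df₂ = 2P_c`; (b) `T df₂ df₃ = −2X`; (c) `(L_X T) df₂ = 0`. -/
theorem kovalevskaya_T (a : ℝ) (x : Fin 6 → ℝ) :
    (∀ i j : Fin 6, ∑ k, kovT i j k * pd k kovF₂ x = 2 * kovPc x i j) ∧
    (∀ i : Fin 6, ∑ j, ∑ k, kovT i j k * pd j kovF₂ x * pd k (kovF₃ a) x
      = -2 * kovX a x i) ∧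
    (∀ i j : Fin 6, ∑ k, triLie (kovX a) kovT x i j k * pd k kovF₂ x = 0) := by
  refine ⟨?_, ?_, ?_⟩
  · intro i j
    simp only [Fin.sum_univ_six, kovT_eq, pd_F2]
    fin_cases i <;> fin_cases j <;>
      simp (config := { decide := true }) [tT, kovPc,
        kf1,kf2,kf3,kf4,kf5,kg1,kg2,kg3,kg4,kh1,kh2,kh3,ki1,ki2,kj1,
        Matrix.cons_val_succ, Matrix.vecHead, Matrix.vecTail, Fin.ext_iff] <;> ring
  · intro i
    simp only [Fin.sum_univ_six, kovT_eq, pd_F2, pd_F3]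
    fin_cases i <;>
      simp (config := { decide := true }) [tT, kovX,
        kf1,kf2,kf3,kf4,kf5,kg1,kg2,kg3,kg4,kh1,kh2,kh3,ki1,ki2,kj1,
        Matrix.cons_val_succ, Matrix.vecHead, Matrix.vecTail, Fin.ext_iff] <;> ring
  · intro i j
    simp only [triLie, pd_kovX, kovT_eq, pd_F2, Fin.sum_univ_six]
    fin_cases i <;> fin_cases j <;>
      simp (config := { decide := true }) [tT, jacX,
        kf1,kf2,kf3,kf4,kf5,kg1,kg2,kg3,kg4,kh1,kh2,kh3,ki1,ki2,kj1,
        Matrix.cons_val_succ, Matrix.vecHead, Matrix.vecTail, Fin.ext_iff] <;> ring
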